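/- Let a < b < n be coprime positive integers (gcd(a,b)=1). For all real t1, t2, t3, μ_{a,b,n}(t1,t2,t3) ≤ max( (n(a+b)·μ_{a,b}(t1,t2) + ab)/(2ab + an + bn), (3b−a)/(2n) ). -/

import Mathlib

/-- Distance from a real number to the nearest integer. -/
noncomputable def dni (u : ℝ) : ℝ := |u - round u|

/-- Approximation cost of `(t1, t2)` relative to the two-element set `{a, b}`. -/
noncomputable def mu2 (a b : ℕ) (t1 t2 : ℝ) : ℝ :=
  ⨅ x : ℝ, max (dni (t1 - x * a)) (dni (t2 - x * b))

/-- Approximation cost of `(t1, t2, t3)` relative to the set `{a, b, n}`. -/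
noncomputable def mu3 (a b n : ℕ) (t1 t2 t3 : ℝ) : ℝ :=
  ⨅ x : ℝ, max (dni (t1 - x * a)) (max (dni (t2 - x * b)) (dni (t3 - x * n)))

/-- Angular Kronecker constant of `{a, b, n}`. -/
noncomputable def alpha3 (a b n : ℕ) : ℝ :=
  sSup {v : ℝ | ∃ t1 t2 t3 : ℝ, v = mu3 a b n t1 t2 t3}

/-- Binary Kronecker constant of `{a, b, n}`. -/
noncomputable def beta3 (a b n : ℕ) : ℝ :=
  sSup {v : ℝ | ∃ t1 t2 t3 : ℝ, t1 ∈ ({0, 1/2} : Set ℝ) ∧ t2 ∈ ({0, 1/2} : Set ℝ) ∧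
    t3 ∈ ({0, 1/2} : Set ℝ) ∧ v = mu3 a b n t1 t2 t3}

lemma dni_nonneg (u : ℝ) : 0 ≤ dni u := abs_nonneg _

lemma dni_le_half (u : ℝ) : dni u ≤ 1/2 := abs_sub_round u

/-- `round` is the nearest integer. -/
lemma dni_le (u : ℝ) (m : ℤ) : dni u ≤ |u - m| := by
  have hfr : Int.fract u = u - ⌊u⌋ := (Int.self_sub_floor u).symm
  have h0 := Int.fract_nonneg u
  have h1 := Int.fract_lt_one u
  rw [dni, abs_sub_round_eq_min]
  rcases le_or_gt m ⌊u⌋ with h | h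
  · have hm : (m : ℝ) ≤ (⌊u⌋ : ℝ) := by exact_mod_cast h
    calc min (Int.fract u) (1 - Int.fract u) ≤ Int.fract u := min_le_left _ _
      _ ≤ u - m := by linarith
      _ ≤ |u - m| := le_abs_self _
  · have hm : (⌊u⌋ : ℝ) + 1 ≤ (m : ℝ) := by exact_mod_cast h
    calc min (Int.fract u) (1 - Int.fract u) ≤ 1 - Int.fract u := min_le_right _ _
      _ ≤ (m : ℝ) - u := by linarith
      _ ≤ |(m : ℝ) - u| := le_abs_self _
      _ = |u - m| := abs_sub_comm _ _

/-- In any closed interval of length at least `1 - 2c` there is a point at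
distance at most `c` from the integers. -/
lemma exists_dni_le {α β c : ℝ} (hc : 0 ≤ c) (hch : c < 1/2) (h : 1 - 2*c ≤ β - α) :
    ∃ u, α ≤ u ∧ u ≤ β ∧ dni u ≤ c := by
  by_cases hα : dni α ≤ c
  · exact ⟨α, le_refl _, by linarith, hα⟩
  · push_neg at hα
    have hfr : Int.fract α = α - ⌊α⌋ := (Int.self_sub_floor α).symm
    have h0 := Int.fract_nonneg α
    have h01 := Int.fract_lt_one α
    have h1 : c < Int.fract α := by
      have h2 := dni_le α ⌊α⌋
      have h3 : |α - (⌊α⌋ : ℝ)| = Int.fract α := by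
        rw [← hfr] at *
        exact abs_of_nonneg h0
      rw [h3] at h2
      linarith
    have h2 : Int.fract α < 1 - c := by
      have h4 := dni_le α (⌊α⌋ + 1)
      have h5 : |α - ((⌊α⌋ + 1 : ℤ) : ℝ)| = 1 - Int.fract α := by
        push_cast
        rw [show α - ((⌊α⌋ : ℝ) + 1) = -(1 - Int.fract α) by rw [hfr]; ring, abs_neg]
        exact abs_of_nonneg (by linarith)
      rw [h5] at h4
      linarith
    refine ⟨(⌊α⌋ : ℝ) + 1 - c, by linarith, by linarith, ?_⟩
    calc dni ((⌊α⌋ : ℝ) + 1 - c) ≤ |(⌊α⌋ : ℝ) + 1 - c - ((⌊α⌋ + 1 : ℤ) : ℝ)| := dni_le _ _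
      _ = c := by
          push_cast
          rw [show (⌊α⌋ : ℝ) + 1 - c - ((⌊α⌋ : ℝ) + 1) = -c by ring, abs_neg, abs_of_nonneg hc]

set_option maxHeartbeats 1000000 in
theorem stmt_7 (a b n : ℕ) (ha : 0 < a) (hab : a < b) (hbn : b < n)
    (hcop : Nat.Coprime a b) (t1 t2 t3 : ℝ) :
    mu3 a b n t1 t2 t3 ≤
      max ((n * (a + b) * mu2 a b t1 t2 + a * b) / (2 * a * b + a * n + b * n))
        ((3 * (b : ℝ) - a) / (2 * n)) := by
  have ha' : (0:ℝ) < a := by exact_mod_cast ha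
  have hab' : (a:ℝ) < b := by exact_mod_cast hab
  have hbn' : (b:ℝ) < n := by exact_mod_cast hbn
  have hb' : (0:ℝ) < b := lt_trans ha' hab'
  have hn' : (0:ℝ) < n := lt_trans hb' hbn'
  set μ : ℝ := mu2 a b t1 t2 with hμ
  set D : ℝ := 2 * a * b + a * n + b * n with hD
  have hD0 : (0:ℝ) < D := by rw [hD]; positivity
  clear_value D
  -- the infimum defining mu3 is bounded below
  have bdd3 : BddBelow (Set.range fun x : ℝ =>
      max (dni (t1 - x * a)) (max (dni (t2 - x * b)) (dni (t3 - x * n)))) := by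
    refine ⟨0, ?_⟩
    rintro v ⟨x, rfl⟩
    exact le_max_of_le_left (dni_nonneg _)
  have hmu3_le : ∀ x : ℝ, mu3 a b n t1 t2 t3 ≤
      max (dni (t1 - x * a)) (max (dni (t2 - x * b)) (dni (t3 - x * n))) :=
    fun x => ciInf_le bdd3 x
  -- it suffices to prove the bound with an epsilon of room
  by_contra hcon
  push_neg at hcon
  set R : ℝ := max ((n * (a + b) * μ + a * b) / D) ((3 * (b:ℝ) - a) / (2 * n)) with hR
  clear_value R
  set ε : ℝ := (mu3 a b n t1 t2 t3 - R) / 2 with hε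
  have hε0 : 0 < ε := by rw [hε]; linarith
  have hgoal : mu3 a b n t1 t2 t3 ≤ R + ε → False := by
    intro h; rw [hε] at h; linarith
  apply hgoal
  -- choose a near-optimal point for the pair {a, b}
  clear_value ε
  set δ : ℝ := ε * D / (n * (a + b)) with hδ
  have hδ0 : 0 < δ := by rw [hδ]; positivity
  clear_value δ
  have hlt : mu2 a b t1 t2 < μ + δ := by rw [← hμ]; linarith [hδ0]
  obtain ⟨y, hy⟩ := exists_lt_of_ciInf_lt hlt
  set μ' : ℝ := μ + δ with hμ'
  clear_value μ'
  set c : ℝ := max ((n * (a + b) * μ' + a * b) / D) ((3 * (b:ℝ) - a) / (2 * n)) with hc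
  clear_value c
  -- c is at most R + ε
  have hcR : c ≤ R + ε := by
    have h1 : (n * (a + b) * μ' + a * b) / D = (n * (a + b) * μ + a * b) / D + ε := by
      rw [hμ', hδ]
      field_simp
      ring
    rw [hc, hR]
    apply max_le
    · rw [h1]
      exact add_le_add_left (le_max_left _ _) ε
    · have h2 := le_max_right ((n * (a + b) * μ + a * b) / D) ((3 * (b:ℝ) - a) / (2 * n))
      linarith
  refine le_trans ?_ hcR
  -- key facts about c
  have hcT2 : (3 * (b:ℝ) - a) ≤ c * (2 * n) := by
    rw [← div_le_iff₀ (by positivity), hc]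
    exact le_max_right _ _
  have hcM1 : (n:ℝ) * (a + b) * μ' + a * b ≤ c * D := by
    rw [← div_le_iff₀ hD0, hc]
    exact le_max_left _ _
  have hc0 : 0 < c := by
    have h2 : (0:ℝ) < (3 * (b:ℝ) - a) / (2 * n) := by
      apply div_pos (by linarith) (by positivity)
    rw [hc]
    exact lt_of_lt_of_le h2 (le_max_right _ _)
  by_cases hhalf : c < 1/2
  swap
  · -- trivial case: c ≥ 1/2
    push_neg at hhalf
    calc mu3 a b n t1 t2 t3 ≤
        max (dni (t1 - 0 * a)) (max (dni (t2 - 0 * b)) (dni (t3 - 0 * n))) := hmu3_le 0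
      _ ≤ 1/2 := max_le (dni_le_half _) (max_le (dni_le_half _) (dni_le_half _))
      _ ≤ c := hhalf
  -- main case: c < 1/2
  have hgy : dni (t1 - y * a) < μ' := lt_of_le_of_lt (le_max_left _ _) hy
  have hhy : dni (t2 - y * b) < μ' := lt_of_le_of_lt (le_max_right _ _) hy
  set k1 : ℤ := round (t1 - y * a) with hk1
  set k2 : ℤ := round (t2 - y * b) with hk2
  have hgy' : |t1 - y * a - (k1:ℝ)| < μ' := by rw [hk1]; exact hgy
  have hhy' : |t2 - y * b - (k2:ℝ)| < μ' := by rw [hk2]; exact hhy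
  clear_value k1 k2
  set z : ℝ := y + (t1 - y * a - k1) / a with hzdef
  set w : ℝ := y + (t2 - y * b - k2) / b with hwdef
  clear_value z w
  have hz : t1 - z * a = k1 := by rw [hzdef]; field_simp; ring
  have hw : t2 - w * b = k2 := by rw [hwdef]; field_simp; ring
  have hzy : |z - y| < μ' / a := by
    rw [hzdef, show y + (t1 - y * a - k1) / a - y = (t1 - y * a - k1) / a by ring,
      abs_div, abs_of_pos ha']
    gcongr
  have hwy : |w - y| < μ' / b := by
    rw [hwdef, show y + (t2 - y * b - k2) / b - y = (t2 - y * b - k2) / b by ring,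
      abs_div, abs_of_pos hb']
    gcongr
  set p : ℝ := max (z - c/a) (w - c/b) with hpdef
  set q : ℝ := min (z + c/a) (w + c/b) with hqdef
  clear_value p q
  -- on [p, q] both pair distances are at most c
  have hgood : ∀ x : ℝ, p ≤ x → x ≤ q →
      dni (t1 - x * a) ≤ c ∧ dni (t2 - x * b) ≤ c := by
    intro x hp hq
    constructor
    · have h1 : |z - x| ≤ c / a := by
        rw [abs_le]
        constructor
        · have h2 : q ≤ z + c/a := by rw [hqdef]; exact min_le_left _ _
          linarith
        · have h2 : z - c/a ≤ p := by rw [hpdef]; exact le_max_left _ _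
          linarith
      calc dni (t1 - x * a) ≤ |t1 - x * a - k1| := dni_le _ _
        _ = |(z - x) * a| := by rw [show t1 - x * a - (k1:ℝ) = (t1 - z * a) - (k1:ℝ) + (z - x) * a by ring, hz]; ring_nf
        _ = |z - x| * a := by rw [abs_mul, abs_of_pos ha']
        _ ≤ (c / a) * a := mul_le_mul_of_nonneg_right h1 ha'.le
        _ = c := div_mul_cancel₀ c ha'.ne'
    · have h1 : |w - x| ≤ c / b := by
        rw [abs_le]
        constructor
        · have h2 : q ≤ w + c/b := by rw [hqdef]; exact min_le_right _ _
          linarith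
        · have h2 : w - c/b ≤ p := by rw [hpdef]; exact le_max_right _ _
          linarith
      calc dni (t2 - x * b) ≤ |t2 - x * b - k2| := dni_le _ _
        _ = |(w - x) * b| := by rw [show t2 - x * b - (k2:ℝ) = (t2 - w * b) - (k2:ℝ) + (w - x) * b by ring, hw]; ring_nf
        _ = |w - x| * b := by rw [abs_mul, abs_of_pos hb']
        _ ≤ (c / b) * b := mul_le_mul_of_nonneg_right h1 hb'.le
        _ = c := div_mul_cancel₀ c hb'.ne'
  -- length estimate for the interval [p, q]
  have key1 : (a:ℝ) * b * (1 - 2*c) ≤ n * (a + b) * (c - μ') := by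
    rw [hD] at hcM1
    linarith [hcM1]
  have hmix : 1 - 2*c ≤ (c/a - μ'/a + c/b - μ'/b) * n := by
    rw [show c/a - μ'/a + c/b - μ'/b = ((c - μ')*b + (c - μ')*a)/(a*b) by field_simp; ring,
      div_mul_eq_mul_div, le_div_iff₀ (by positivity)]
    linarith [key1]
  have hcb2 : 1 - 2*c ≤ (2 * (c/b)) * n := by
    rw [show (2 * (c/b)) * n = 2 * c * n / b by ring, le_div_iff₀ hb']
    linarith [hcT2, mul_nonneg hb'.le hc0.le]
  have hca2 : 1 - 2*c ≤ (2 * (c/a)) * n := by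
    have h : c / b ≤ c / a := by gcongr
    have h' := mul_le_mul_of_nonneg_right h hn'.le
    linarith [hcb2, h']
  have hzw1 : -(μ'/a + μ'/b) ≤ z - w := by
    have h1 := abs_le.mp hzy.le
    have h2 := abs_le.mp hwy.le
    obtain ⟨h1a, h1b⟩ := h1
    obtain ⟨h2a, h2b⟩ := h2
    linarith
  have hzw2 : -(μ'/a + μ'/b) ≤ w - z := by
    have h1 := abs_le.mp hzy.le
    have h2 := abs_le.mp hwy.le
    obtain ⟨h1a, h1b⟩ := h1
    obtain ⟨h2a, h2b⟩ := h2
    linarith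
  have hzwn : (-(μ'/a + μ'/b)) * n ≤ (z - w) * n := mul_le_mul_of_nonneg_right hzw1 hn'.le
  have hwzn : (-(μ'/a + μ'/b)) * n ≤ (w - z) * n := mul_le_mul_of_nonneg_right hzw2 hn'.le
  have hlen : 1 - 2*c ≤ (q - p) * n := by
    rw [hpdef, hqdef]
    rcases max_cases (z - c/a) (w - c/b) with ⟨hp1, _⟩ | ⟨hp1, _⟩ <;>
      rcases min_cases (z + c/a) (w + c/b) with ⟨hq1, _⟩ | ⟨hq1, _⟩ <;>
      rw [hp1, hq1] <;> linarith [hca2, hcb2, hmix, hzwn, hwzn]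
  -- find a point of [p, q] that is good for t3
  obtain ⟨u, hu1, hu2, hu3⟩ := exists_dni_le hc0.le hhalf
    (show 1 - 2*c ≤ (t3 - p * n) - (t3 - q * n) by
      have : (t3 - p * n) - (t3 - q * n) = (q - p) * n := by ring
      linarith [hlen])
  set x : ℝ := (t3 - u) / n with hxdef
  clear_value x
  have hx3 : t3 - x * n = u := by rw [hxdef]; field_simp; ring
  have hpx : p ≤ x := by
    rw [hxdef, le_div_iff₀ hn']
    linarith
  have hxq : x ≤ q := by
    rw [hxdef, div_le_iff₀ hn']
    linarith
  obtain ⟨hg1, hg2⟩ := hgood x hpx hxq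
  calc mu3 a b n t1 t2 t3 ≤
      max (dni (t1 - x * a)) (max (dni (t2 - x * b)) (dni (t3 - x * n))) := hmu3_le x
    _ ≤ c := max_le hg1 (max_le hg2 (by rw [hx3]; exact hu3))
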